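/- For every s,t ≥ 0, 2^{-K}|t-s|^{2HK} ≤ E[(B^{H,K}_t - B^{H,K}_s)^2] ≤ 2^{1-K}|t-s|^{2HK}; equivalently, the function (t,s) ↦ R^{H,K}(t,t) + R^{H,K}(s,s) - 2R^{H,K}(t,s) is bounded between 2^{-K}|t-s|^{2HK} and 2^{1-K}|t-s|^{2HK}. -/

import Mathlib

open Real Set MeasureTheory

/-- Covariance of the bifractional Brownian motion. -/
noncomputable def Rbf (H K t s : ℝ) : ℝ :=
  2 ^ (-K) * ((t ^ (2 * H) + s ^ (2 * H)) ^ K - |t - s| ^ (2 * H * K))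

/-! ### Gaussian integral lemmas -/

lemma integrable_aux (T : ℝ) :
    Integrable (fun x : ℝ => Complex.exp (Complex.I * T * x) * Complex.exp (-1 * x ^ 2)) := by
  have h := integrable_cexp_quadratic (b := 1) (by norm_num) (Complex.I * T) 0
  apply h.congr
  filter_upwards with x
  rw [← Complex.exp_add]
  ring_nf

lemma gauss_cos (T : ℝ) :
    ∫ x : ℝ, Real.cos (T * x) * Real.exp (-x ^ 2) = Real.sqrt π * Real.exp (-T ^ 2 / 4) := by
  have hInt := integrable_aux T
  have h := fourierIntegral_gaussian (b := 1) (by norm_num) (T : ℂ)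
  have h2 := congrArg Complex.re h
  rw [← RCLike.re_eq_complex_re, ← integral_re hInt, RCLike.re_eq_complex_re] at h2
  have hL : ∀ x : ℝ, (Complex.exp (Complex.I * T * x) * Complex.exp (-1 * x ^ 2)).re
      = Real.cos (T * x) * Real.exp (-x ^ 2) := by
    intro x
    have e1 : Complex.I * T * x = ((T * x : ℝ) : ℂ) * Complex.I := by push_cast; ring
    have e2 : (-1 : ℂ) * x ^ 2 = ((-x ^ 2 : ℝ) : ℂ) := by push_cast; ring
    rw [e1, e2, ← Complex.ofReal_exp, mul_comm, Complex.re_ofReal_mul,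
      Complex.exp_ofReal_mul_I_re, mul_comm]
  simp only [hL] at h2
  rw [h2]
  have hR : ((π : ℂ) / 1) ^ (1 / 2 : ℂ) = ((Real.sqrt π : ℝ) : ℂ) := by
    rw [div_one, Real.sqrt_eq_rpow, Complex.ofReal_cpow pi_pos.le]
    norm_num
  rw [hR]
  have hE : (-(T:ℂ) ^ 2 / (4 * 1)) = ((-T ^ 2 / 4 : ℝ) : ℂ) := by push_cast; ring
  rw [hE, ← Complex.ofReal_exp, ← Complex.ofReal_mul, Complex.ofReal_re]

lemma integrable_bd (f : ℝ → ℝ) (hf : Continuous f) (hbd : ∀ x, |f x| ≤ 1) :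
    Integrable (fun x : ℝ => f x * Real.exp (-x ^ 2)) := by
  apply (integrable_exp_neg_mul_sq one_pos).mono'
    ((hf.mul (Real.continuous_exp.comp (continuous_pow 2).neg)).aestronglyMeasurable)
  filter_upwards with x
  simp only [Real.norm_eq_abs, Pi.mul_apply, Pi.neg_apply, Function.comp_apply, abs_mul, Function.comp, neg_mul, one_mul,
    abs_of_pos (Real.exp_pos _)]
  exact mul_le_of_le_one_left (Real.exp_pos _).le (hbd x)

lemma integrable_cos_exp (T : ℝ) :
    Integrable (fun x : ℝ => Real.cos (T * x) * Real.exp (-x ^ 2)) :=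
  integrable_bd _ (Real.continuous_cos.comp (continuous_const.mul continuous_id))
    (fun _ => Real.abs_cos_le_one _)

lemma integrable_exp_sq : Integrable (fun x : ℝ => Real.exp (-x ^ 2)) := by
  have := integrable_exp_neg_mul_sq (one_pos (α := ℝ))
  simpa using this

lemma gauss_exp : ∫ x : ℝ, Real.exp (-x ^ 2) = Real.sqrt π := by
  have := integral_gaussian 1
  simpa using this

lemma gauss_sin_sq (T : ℝ) :
    ∫ x : ℝ, Real.sin (T * x) ^ 2 * Real.exp (-x ^ 2)
      = Real.sqrt π / 2 * (1 - Real.exp (-T ^ 2)) := by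
  have h1 : ∀ x : ℝ, Real.sin (T * x) ^ 2 * Real.exp (-x ^ 2)
      = (1 / 2) * Real.exp (-x ^ 2) - (1 / 2) * (Real.cos (2 * T * x) * Real.exp (-x ^ 2)) := by
    intro x
    rw [Real.sin_sq_eq_half_sub, show 2 * (T * x) = 2 * T * x by ring]
    ring
  simp only [h1]
  rw [integral_sub (integrable_exp_sq.const_mul _) ((integrable_cos_exp _).const_mul _),
    integral_const_mul, integral_const_mul, gauss_exp, gauss_cos]
  rw [show -(2 * T) ^ 2 / 4 = -T ^ 2 by ring]
  ring

lemma integrable_sin_sin (P Q : ℝ) :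
    Integrable (fun x : ℝ => Real.sin (P * x) * Real.sin (Q * x) * Real.exp (-x ^ 2)) := by
  apply integrable_bd _ ((Real.continuous_sin.comp (continuous_const.mul continuous_id)).mul
    (Real.continuous_sin.comp (continuous_const.mul continuous_id)))
  intro x
  simp only [Pi.mul_apply, Function.comp_apply, id_eq]
  rw [abs_mul]
  exact mul_le_one₀ (Real.abs_sin_le_one _) (abs_nonneg _) (Real.abs_sin_le_one _)

lemma integrable_sin_sq (P : ℝ) :
    Integrable (fun x : ℝ => Real.sin (P * x) ^ 2 * Real.exp (-x ^ 2)) := by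
  have := integrable_sin_sin P P
  simpa [sq] using this

/-! ### Cauchy–Schwarz -/

lemma cauchy_sin (P Q : ℝ) (hQ : 0 < ∫ x : ℝ, Real.sin (Q * x) ^ 2 * Real.exp (-x ^ 2)) :
    (∫ x : ℝ, Real.sin (P * x) * Real.sin (Q * x) * Real.exp (-x ^ 2)) ^ 2
      ≤ (∫ x : ℝ, Real.sin (P * x) ^ 2 * Real.exp (-x ^ 2))
        * (∫ x : ℝ, Real.sin (Q * x) ^ 2 * Real.exp (-x ^ 2)) := by
  set A := ∫ x : ℝ, Real.sin (P * x) ^ 2 * Real.exp (-x ^ 2) with hA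
  set B := ∫ x : ℝ, Real.sin (P * x) * Real.sin (Q * x) * Real.exp (-x ^ 2) with hB
  set C := ∫ x : ℝ, Real.sin (Q * x) ^ 2 * Real.exp (-x ^ 2) with hC
  have h0 : 0 ≤ ∫ x : ℝ, (C * Real.sin (P * x) - B * Real.sin (Q * x)) ^ 2
      * Real.exp (-x ^ 2) := by
    apply integral_nonneg
    intro x
    positivity
  have hexp : (fun x : ℝ => (C * Real.sin (P * x) - B * Real.sin (Q * x)) ^ 2 * Real.exp (-x ^ 2))
      = fun x : ℝ => (C ^ 2 * (Real.sin (P * x) ^ 2 * Real.exp (-x ^ 2))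
        - 2 * C * B * (Real.sin (P * x) * Real.sin (Q * x) * Real.exp (-x ^ 2)))
        + B ^ 2 * (Real.sin (Q * x) ^ 2 * Real.exp (-x ^ 2)) := by
    funext x; ring
  have hf : Integrable (fun x : ℝ => C ^ 2 * (Real.sin (P * x) ^ 2 * Real.exp (-x ^ 2))
      - 2 * C * B * (Real.sin (P * x) * Real.sin (Q * x) * Real.exp (-x ^ 2))) :=
    ((integrable_sin_sq P).const_mul _).sub ((integrable_sin_sin P Q).const_mul _)
  have hg : Integrable (fun x : ℝ => B ^ 2 * (Real.sin (Q * x) ^ 2 * Real.exp (-x ^ 2))) :=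
    (integrable_sin_sq Q).const_mul _
  rw [hexp, integral_add hf hg,
    integral_sub ((integrable_sin_sq P).const_mul _) ((integrable_sin_sin P Q).const_mul _),
    integral_const_mul, integral_const_mul, integral_const_mul, ← hA, ← hB, ← hC] at h0
  nlinarith [hQ, sq_nonneg B]

/-! ### The key pointwise inequality -/

lemma pt1 (b c : ℝ) (hb : 0 ≤ b) (hc : 0 ≤ c) :
    (Real.exp (-b ^ 2) - Real.exp (-(b + c) ^ 2)) ^ 2 ≤ 1 - Real.exp (-c ^ 2) := by
  rcases eq_or_lt_of_le hc with hc0 | hc0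
  · rw [← hc0]; norm_num
  have hπ : 0 < Real.sqrt π := Real.sqrt_pos.mpr pi_pos
  have hdiff : ∀ x : ℝ, Real.cos (2 * b * x) * Real.exp (-x ^ 2)
      - Real.cos (2 * (b + c) * x) * Real.exp (-x ^ 2)
      = 2 * (Real.sin ((2 * b + c) * x) * Real.sin (c * x) * Real.exp (-x ^ 2)) := by
    intro x
    rw [← sub_mul, Real.cos_sub_cos]
    rw [show (2 * b * x + 2 * (b + c) * x) / 2 = (2 * b + c) * x by ring,
        show (2 * b * x - 2 * (b + c) * x) / 2 = -(c * x) by ring, Real.sin_neg]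
    ring
  have hid : Real.sqrt π * (Real.exp (-b ^ 2) - Real.exp (-(b + c) ^ 2))
      = 2 * ∫ x : ℝ, Real.sin ((2 * b + c) * x) * Real.sin (c * x) * Real.exp (-x ^ 2) := by
    have h1 := gauss_cos (2 * b)
    have h2 := gauss_cos (2 * (b + c))
    have hs : ∫ x : ℝ, (Real.cos (2 * b * x) * Real.exp (-x ^ 2)
        - Real.cos (2 * (b + c) * x) * Real.exp (-x ^ 2))
        = Real.sqrt π * Real.exp (-b ^ 2) - Real.sqrt π * Real.exp (-(b + c) ^ 2) := by
      rw [integral_sub (integrable_cos_exp _) (integrable_cos_exp _), h1, h2,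
        show -(2 * b) ^ 2 / 4 = -b ^ 2 by ring, show -(2 * (b + c)) ^ 2 / 4 = -(b + c) ^ 2 by ring]
    rw [funext hdiff] at hs
    rw [integral_const_mul] at hs
    rw [mul_sub, hs]
  have hQpos : 0 < ∫ x : ℝ, Real.sin (c * x) ^ 2 * Real.exp (-x ^ 2) := by
    rw [gauss_sin_sq]
    have : Real.exp (-c ^ 2) < 1 := by
      rw [Real.exp_lt_one_iff]
      nlinarith [pow_pos hc0 2]
    nlinarith
  have hcs := cauchy_sin (2 * b + c) c hQpos
  rw [gauss_sin_sq, gauss_sin_sq] at hcs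
  have hP1 : Real.sqrt π / 2 * (1 - Real.exp (-(2 * b + c) ^ 2)) ≤ Real.sqrt π / 2 := by
    nlinarith [Real.exp_pos (-(2 * b + c) ^ 2)]
  have hQnn : 0 ≤ Real.sqrt π / 2 * (1 - Real.exp (-c ^ 2)) := by
    have : Real.exp (-c ^ 2) ≤ 1 := Real.exp_le_one_iff.mpr (by nlinarith [pow_pos hc0 2])
    nlinarith
  have hB2 : (Real.sqrt π * (Real.exp (-b ^ 2) - Real.exp (-(b + c) ^ 2))) ^ 2
      ≤ 4 * (Real.sqrt π / 2 * (Real.sqrt π / 2 * (1 - Real.exp (-c ^ 2)))) := by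
    rw [hid]
    nlinarith [mul_le_mul_of_nonneg_right hP1 hQnn, hcs]
  have hπ2 : Real.sqrt π ^ 2 = π := Real.sq_sqrt pi_pos.le
  have e1 : (Real.sqrt π * (Real.exp (-b ^ 2) - Real.exp (-(b + c) ^ 2))) ^ 2
      = π * (Real.exp (-b ^ 2) - Real.exp (-(b + c) ^ 2)) ^ 2 := by
    rw [mul_pow, hπ2]
  have e2 : 4 * (Real.sqrt π / 2 * (Real.sqrt π / 2 * (1 - Real.exp (-c ^ 2))))
      = π * (1 - Real.exp (-c ^ 2)) := by
    rw [show 4 * (Real.sqrt π / 2 * (Real.sqrt π / 2 * (1 - Real.exp (-c ^ 2))))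
      = Real.sqrt π ^ 2 * (1 - Real.exp (-c ^ 2)) by ring, hπ2]
  rw [e1, e2] at hB2
  exact le_of_mul_le_mul_left hB2 pi_pos

lemma real_subadd {x y p : ℝ} (hx : 0 ≤ x) (hy : 0 ≤ y) (hp : 0 ≤ p) (hp1 : p ≤ 1) :
    (x + y) ^ p ≤ x ^ p + y ^ p := by
  have h := NNReal.rpow_add_le_add_rpow (x.toNNReal) (y.toNNReal) hp hp1
  have h2 := NNReal.coe_le_coe.mpr h
  rw [NNReal.coe_add, NNReal.coe_rpow, NNReal.coe_rpow, NNReal.coe_rpow, NNReal.coe_add,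
    Real.coe_toNNReal x hx, Real.coe_toNNReal y hy] at h2
  exact h2

lemma bracket_nonneg {a : ℝ} (ha : 0 < a) (ha2 : a ≤ 2) {s t : ℝ} (hs : 0 ≤ s) (hst : s ≤ t)
    {l : ℝ} (hl : 0 < l) :
    0 ≤ (1 - Real.exp (-(l * t ^ a))) + (1 - Real.exp (-(l * s ^ a)))
      + (1 - Real.exp (-(l * ((t - s) ^ a / 2))))
      - 2 * (1 - Real.exp (-(l * ((t ^ a + s ^ a) / 2)))) := by
  have ht : 0 ≤ t := hs.trans hst
  have hts : 0 ≤ t - s := sub_nonneg.mpr hst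
  set b := Real.sqrt (l / 2 * s ^ a) with hbdef
  set c := Real.sqrt (l / 2 * (t - s) ^ a) with hcdef
  set A := l / 2 * t ^ a with hAdef
  have hb0 : 0 ≤ b := Real.sqrt_nonneg _
  have hc0 : 0 ≤ c := Real.sqrt_nonneg _
  have hA0 : 0 ≤ A := by positivity
  have hb2 : b ^ 2 = l / 2 * s ^ a := Real.sq_sqrt (by positivity)
  have hc2 : c ^ 2 = l / 2 * (t - s) ^ a := Real.sq_sqrt (by positivity)
  have hsub : Real.sqrt A ≤ b + c := by
    rw [hAdef, hbdef, hcdef, Real.sqrt_mul (by positivity : (0:ℝ) ≤ l / 2),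
      Real.sqrt_mul (by positivity : (0:ℝ) ≤ l / 2),
      Real.sqrt_mul (by positivity : (0:ℝ) ≤ l / 2), ← mul_add]
    apply mul_le_mul_of_nonneg_left _ (Real.sqrt_nonneg _)
    rw [Real.sqrt_eq_rpow, Real.sqrt_eq_rpow, Real.sqrt_eq_rpow,
      ← Real.rpow_mul ht, ← Real.rpow_mul hs, ← Real.rpow_mul hts]
    calc t ^ (a * (1 / 2)) = (s + (t - s)) ^ (a * (1 / 2)) := by ring_nf
      _ ≤ s ^ (a * (1 / 2)) + (t - s) ^ (a * (1 / 2)) :=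
        real_subadd hs hts (by positivity) (by linarith)
  have hAbc : A ≤ (b + c) ^ 2 := by
    have h := pow_le_pow_left₀ (Real.sqrt_nonneg A) hsub 2
    rwa [Real.sq_sqrt hA0] at h
  have hbA : b ^ 2 ≤ A := by
    rw [hb2, hAdef]
    have : s ^ a ≤ t ^ a := Real.rpow_le_rpow hs hst ha.le
    nlinarith
  have e1 : l * t ^ a = 2 * A := by rw [hAdef]; ring
  have e2 : l * s ^ a = 2 * b ^ 2 := by rw [hb2]; ring
  have e3 : l * ((t - s) ^ a / 2) = c ^ 2 := by rw [hc2]; ring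
  have e4 : l * ((t ^ a + s ^ a) / 2) = A + b ^ 2 := by rw [hAdef, hb2]; ring
  rw [e1, e2, e3, e4]
  have hmono : Real.exp (-b ^ 2) - Real.exp (-A) ≤ Real.exp (-b ^ 2) - Real.exp (-(b + c) ^ 2) := by
    have : Real.exp (-(b + c) ^ 2) ≤ Real.exp (-A) := by
      apply Real.exp_le_exp.mpr; linarith
    linarith
  have hnn : 0 ≤ Real.exp (-b ^ 2) - Real.exp (-A) := by
    have : Real.exp (-A) ≤ Real.exp (-b ^ 2) := by
      apply Real.exp_le_exp.mpr; linarith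
    linarith
  have hsq : (Real.exp (-b ^ 2) - Real.exp (-A)) ^ 2
      ≤ (Real.exp (-b ^ 2) - Real.exp (-(b + c) ^ 2)) ^ 2 := by
    apply pow_le_pow_left₀ hnn hmono
  have hkey := (hsq.trans (pt1 b c hb0 hc0))
  have eA : Real.exp (-(2 * A)) = Real.exp (-A) ^ 2 := by
    rw [← Real.exp_nat_mul]; ring_nf
  have eB : Real.exp (-(2 * b ^ 2)) = Real.exp (-b ^ 2) ^ 2 := by
    rw [← Real.exp_nat_mul]; ring_nf
  have eAB : Real.exp (-(A + b ^ 2)) = Real.exp (-A) * Real.exp (-b ^ 2) := by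
    rw [← Real.exp_add]; ring_nf
  rw [eA, eB, eAB]
  nlinarith [hkey]

/-! ### Integral representation of `z ^ K` -/

lemma measurable_F (z : ℝ) (K : ℝ) :
    Measurable (fun l : ℝ => (1 - Real.exp (-(l * z))) * l ^ (-1 - K)) := by
  fun_prop

lemma integrable_F {K : ℝ} (hK0 : 0 < K) (hK1 : K < 1) {z : ℝ} (hz : 0 ≤ z) :
    IntegrableOn (fun l : ℝ => (1 - Real.exp (-(l * z))) * l ^ (-1 - K)) (Ioi 0) := by
  rw [← Ioc_union_Ioi_eq_Ioi (le_of_lt one_pos)]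
  apply IntegrableOn.union
  · have hint : IntegrableOn (fun l : ℝ => z * l ^ (-K)) (Ioc (0:ℝ) 1) := by
      apply Integrable.const_mul
      have h := intervalIntegral.intervalIntegrable_rpow' (a := 0) (b := 1)
        (show (-1:ℝ) < -K by linarith)
      rw [intervalIntegrable_iff, uIoc_of_le (le_of_lt one_pos)] at h
      exact h
    apply hint.mono' ((measurable_F z K).aestronglyMeasurable)
    filter_upwards [ae_restrict_mem measurableSet_Ioc] with l hl
    have hl0 : 0 < l := hl.1
    have h1 : 0 ≤ 1 - Real.exp (-(l * z)) := by
      have : Real.exp (-(l * z)) ≤ 1 :=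
        Real.exp_le_one_iff.mpr (by nlinarith [mul_nonneg hl0.le hz])
      linarith
    have h2 : 1 - Real.exp (-(l * z)) ≤ l * z := by
      have := Real.add_one_le_exp (-(l * z))
      linarith
    rw [Real.norm_eq_abs, abs_mul, abs_of_nonneg h1, abs_of_nonneg (Real.rpow_nonneg hl0.le _)]
    calc (1 - Real.exp (-(l * z))) * l ^ (-1 - K) ≤ (l * z) * l ^ (-1 - K) := by
          apply mul_le_mul_of_nonneg_right h2 (Real.rpow_nonneg hl0.le _)
      _ = z * l ^ (-K) := by
          rw [show l * z * l ^ (-1 - K) = z * (l ^ (1:ℝ) * l ^ (-1 - K)) by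
            rw [Real.rpow_one]; ring, ← Real.rpow_add hl0,
            show (1:ℝ) + (-1 - K) = -K by ring]
  · have hint : IntegrableOn (fun l : ℝ => l ^ (-1 - K)) (Ioi (1:ℝ)) :=
      integrableOn_Ioi_rpow_of_lt (by linarith) one_pos
    apply hint.mono' ((measurable_F z K).aestronglyMeasurable)
    filter_upwards [ae_restrict_mem measurableSet_Ioi] with l hl
    have hl0 : (0:ℝ) < l := lt_trans one_pos hl
    have h1 : 0 ≤ 1 - Real.exp (-(l * z)) := by
      have : Real.exp (-(l * z)) ≤ 1 :=
        Real.exp_le_one_iff.mpr (by nlinarith [mul_nonneg hl0.le hz])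
      linarith
    have h2 : 1 - Real.exp (-(l * z)) ≤ 1 := by linarith [Real.exp_pos (-(l * z))]
    rw [Real.norm_eq_abs, abs_mul, abs_of_nonneg h1, abs_of_nonneg (Real.rpow_nonneg hl0.le _)]
    exact mul_le_of_le_one_left (Real.rpow_nonneg hl0.le _) h2

noncomputable def Ibf (K : ℝ) : ℝ := ∫ l in Ioi (0:ℝ), (1 - Real.exp (-l)) * l ^ (-1 - K)

lemma psi_eq {K : ℝ} (hK0 : 0 < K) (hK1 : K < 1) {z : ℝ} (hz : 0 ≤ z) :
    ∫ l in Ioi (0:ℝ), (1 - Real.exp (-(l * z))) * l ^ (-1 - K) = z ^ K * Ibf K := by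
  rcases eq_or_lt_of_le hz with hz0 | hz0
  · simp [← hz0, Real.zero_rpow (ne_of_gt hK0)]
  have h := integral_comp_mul_left_Ioi (fun u => (1 - Real.exp (-u)) * u ^ (-1 - K)) 0 hz0
  rw [mul_zero] at h
  have heq : EqOn (fun l : ℝ => (1 - Real.exp (-(l * z))) * l ^ (-1 - K))
      (fun l : ℝ => z ^ (1 + K) * ((1 - Real.exp (-(z * l))) * (z * l) ^ (-1 - K))) (Ioi 0) := by
    intro l hl
    have hl0 : (0:ℝ) < l := hl
    simp only
    rw [Real.mul_rpow hz0.le hl0.le, mul_comm l z]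
    rw [show z ^ (1 + K) * ((1 - Real.exp (-(z * l))) * (z ^ (-1 - K) * l ^ (-1 - K)))
      = (z ^ (1 + K) * z ^ (-1 - K)) * ((1 - Real.exp (-(z * l))) * l ^ (-1 - K)) by ring,
      ← Real.rpow_add hz0]
    norm_num
  rw [setIntegral_congr_fun measurableSet_Ioi heq, integral_const_mul, h, smul_eq_mul]
  beta_reduce
  rw [← mul_assoc, show z ^ (1 + K) * z⁻¹ = z ^ K by
    rw [← Real.rpow_neg_one z, ← Real.rpow_add hz0]; norm_num, Ibf]

lemma Ibf_pos {K : ℝ} (hK0 : 0 < K) (hK1 : K < 1) : 0 < Ibf K := by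
  rw [Ibf]
  rw [setIntegral_pos_iff_support_of_nonneg_ae]
  · have hsub : Ioi (0:ℝ)
        ⊆ (Function.support fun l : ℝ => (1 - Real.exp (-l)) * l ^ (-1 - K)) ∩ Ioi 0 := by
      intro l hl
      have hl0 : (0:ℝ) < l := hl
      constructor
      · have h1 : Real.exp (-l) < 1 := Real.exp_lt_one_iff.mpr (by linarith)
        have h2 : (0:ℝ) < l ^ (-1 - K) := Real.rpow_pos_of_pos hl0 _
        simp only [Function.mem_support]
        exact ne_of_gt (mul_pos (by linarith) h2)
      · exact hl
    calc (0:ENNReal) < volume (Ioi (0:ℝ)) := by simp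
      _ ≤ _ := measure_mono hsub
  · filter_upwards [ae_restrict_mem measurableSet_Ioi] with l hl
    have hl0 : (0:ℝ) < l := hl
    have h1 : Real.exp (-l) ≤ 1 := Real.exp_le_one_iff.mpr (by linarith)
    have h2 : (0:ℝ) ≤ l ^ (-1 - K) := Real.rpow_nonneg hl0.le _
    simp only [Pi.zero_apply]
    nlinarith
  · have h := integrable_F hK0 hK1 (z := 1) zero_le_one
    simpa using h

/-! ### The key inequality -/

lemma key {K : ℝ} (hK0 : 0 < K) (hK1 : K ≤ 1) {a s t : ℝ} (ha : 0 < a) (ha2 : a ≤ 2)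
    (hs : 0 ≤ s) (hst : s ≤ t) :
    2 * (((t ^ a + s ^ a) / 2) ^ K) ≤ (t ^ a) ^ K + (s ^ a) ^ K + ((t - s) ^ a / 2) ^ K := by
  have ht : 0 ≤ t := hs.trans hst
  have hX : 0 ≤ t ^ a := Real.rpow_nonneg ht a
  have hY : 0 ≤ s ^ a := Real.rpow_nonneg hs a
  have hW : 0 ≤ (t - s) ^ a / 2 := by
    have := Real.rpow_nonneg (sub_nonneg.mpr hst) a
    linarith
  have hM : 0 ≤ (t ^ a + s ^ a) / 2 := by linarith
  rcases eq_or_lt_of_le hK1 with hK1' | hK1'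
  · rw [hK1']
    simp only [Real.rpow_one]
    linarith
  set F : ℝ → ℝ → ℝ := fun z l => (1 - Real.exp (-(l * z))) * l ^ (-1 - K) with hF
  have hiX := integrable_F hK0 hK1' hX
  have hiY := integrable_F hK0 hK1' hY
  have hiW := integrable_F hK0 hK1' hW
  have hiM := integrable_F hK0 hK1' hM
  have h0 : 0 ≤ ∫ l in Ioi (0:ℝ), (F (t ^ a) l + F (s ^ a) l + F ((t - s) ^ a / 2) l
      - 2 * F ((t ^ a + s ^ a) / 2) l) := by
    apply setIntegral_nonneg measurableSet_Ioi
    intro l hl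
    have hl0 : (0:ℝ) < l := hl
    have hfac : F (t ^ a) l + F (s ^ a) l + F ((t - s) ^ a / 2) l
        - 2 * F ((t ^ a + s ^ a) / 2) l
        = ((1 - Real.exp (-(l * t ^ a))) + (1 - Real.exp (-(l * s ^ a)))
          + (1 - Real.exp (-(l * ((t - s) ^ a / 2))))
          - 2 * (1 - Real.exp (-(l * ((t ^ a + s ^ a) / 2))))) * l ^ (-1 - K) := by
      rw [hF]; ring
    rw [hfac]
    exact mul_nonneg (bracket_nonneg ha ha2 hs hst hl0) (Real.rpow_nonneg hl0.le _)
  have hsplit : ∫ l in Ioi (0:ℝ), (F (t ^ a) l + F (s ^ a) l + F ((t - s) ^ a / 2) l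
      - 2 * F ((t ^ a + s ^ a) / 2) l)
      = (t ^ a) ^ K * Ibf K + (s ^ a) ^ K * Ibf K + ((t - s) ^ a / 2) ^ K * Ibf K
        - 2 * (((t ^ a + s ^ a) / 2) ^ K * Ibf K) := by
    have e1 : Integrable (fun l : ℝ => F (t ^ a) l + F (s ^ a) l)
        (volume.restrict (Ioi (0:ℝ))) := hiX.add hiY
    have e2 : Integrable (fun l : ℝ => F (t ^ a) l + F (s ^ a) l + F ((t - s) ^ a / 2) l)
        (volume.restrict (Ioi (0:ℝ))) := e1.add hiW
    have e3 : Integrable (fun l : ℝ => 2 * F ((t ^ a + s ^ a) / 2) l)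
        (volume.restrict (Ioi (0:ℝ))) := hiM.const_mul 2
    rw [integral_sub e2 e3, integral_add e1 hiW, integral_add hiX hiY, integral_const_mul,
      psi_eq hK0 hK1' hX, psi_eq hK0 hK1' hY, psi_eq hK0 hK1' hW, psi_eq hK0 hK1' hM]
  rw [hsplit] at h0
  have hI := Ibf_pos hK0 hK1'
  have h2 : 0 * Ibf K ≤ ((t ^ a) ^ K + (s ^ a) ^ K + ((t - s) ^ a / 2) ^ K
      - 2 * ((t ^ a + s ^ a) / 2) ^ K) * Ibf K := by nlinarith [h0]
  have h3 := le_of_mul_le_mul_right h2 hI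
  linarith

lemma upper_aux {K X Y : ℝ} (hK0 : 0 < K) (hK1 : K ≤ 1) (hX : 0 ≤ X) (hY : 0 ≤ Y) :
    X ^ K + Y ^ K ≤ 2 ^ (1 - K) * (X + Y) ^ K := by
  have hp : 1 ≤ 1 / K := by
    rw [le_div_iff₀ hK0]; linarith
  have h := NNReal.rpow_add_le_mul_rpow_add_rpow (X.toNNReal ^ K) (Y.toNNReal ^ K) hp
  have hXK : (X.toNNReal ^ K) ^ (1 / K) = X.toNNReal := by
    rw [← NNReal.rpow_mul, mul_one_div, div_self hK0.ne', NNReal.rpow_one]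
  have hYK : (Y.toNNReal ^ K) ^ (1 / K) = Y.toNNReal := by
    rw [← NNReal.rpow_mul, mul_one_div, div_self hK0.ne', NNReal.rpow_one]
  rw [hXK, hYK] at h
  have h2 := NNReal.rpow_le_rpow h hK0.le
  rw [← NNReal.rpow_mul, one_div, inv_mul_cancel₀ hK0.ne', NNReal.rpow_one,
    NNReal.mul_rpow, ← NNReal.rpow_mul] at h2
  have hexp : (K⁻¹ - 1) * K = 1 - K := by field_simp
  rw [hexp] at h2
  have h3 := NNReal.coe_le_coe.mpr h2
  rw [NNReal.coe_add, NNReal.coe_rpow, NNReal.coe_rpow, NNReal.coe_mul, NNReal.coe_rpow,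
    NNReal.coe_rpow, NNReal.coe_add, NNReal.coe_ofNat, Real.coe_toNNReal X hX,
    Real.coe_toNNReal Y hY] at h3
  exact h3

lemma main_helper (H K : ℝ) (hH : H ∈ Set.Ioo (0:ℝ) 1) (hK : K ∈ Set.Ioc (0:ℝ) 1)
    (s t : ℝ) (hs : 0 ≤ s) (hst : s ≤ t) :
    2 ^ (-K) * |t - s| ^ (2 * H * K) ≤ Rbf H K t t + Rbf H K s s - 2 * Rbf H K t s ∧
    Rbf H K t t + Rbf H K s s - 2 * Rbf H K t s ≤ 2 ^ (1 - K) * |t - s| ^ (2 * H * K) := by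
  obtain ⟨hH0, hH1⟩ := hH
  obtain ⟨hK0, hK1⟩ := hK
  have ht : 0 ≤ t := hs.trans hst
  have hd : 0 ≤ t - s := sub_nonneg.mpr hst
  have ha0 : 0 < 2 * H := by linarith
  have ha2 : 2 * H ≤ 2 := by linarith
  set X := t ^ (2 * H) with hXdef
  set Y := s ^ (2 * H) with hYdef
  set W := (t - s) ^ (2 * H) with hWdef
  have hX : 0 ≤ X := Real.rpow_nonneg ht _
  have hY : 0 ≤ Y := Real.rpow_nonneg hs _
  have hW : 0 ≤ W := Real.rpow_nonneg hd _
  have habs : |t - s| = t - s := abs_of_nonneg hd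
  have hWK : |t - s| ^ (2 * H * K) = W ^ K := by
    rw [habs, hWdef]
    exact Real.rpow_mul hd _ _
  have h2K : (2:ℝ) ^ (-K) * 2 ^ K = 1 := by
    rw [← Real.rpow_add two_pos]; norm_num
  have hTT : Rbf H K t t = X ^ K := by
    rw [Rbf, sub_self, abs_zero, Real.zero_rpow (by positivity), sub_zero,
      show t ^ (2 * H) + t ^ (2 * H) = 2 * X by rw [hXdef]; ring,
      Real.mul_rpow (by norm_num) hX, ← mul_assoc, h2K, one_mul]
  have hSS : Rbf H K s s = Y ^ K := by
    rw [Rbf, sub_self, abs_zero, Real.zero_rpow (by positivity), sub_zero,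
      show s ^ (2 * H) + s ^ (2 * H) = 2 * Y by rw [hYdef]; ring,
      Real.mul_rpow (by norm_num) hY, ← mul_assoc, h2K, one_mul]
  have hTS : Rbf H K t s = 2 ^ (-K) * ((X + Y) ^ K - W ^ K) := by
    rw [Rbf, hWK]
  have hhalfW : (W / 2) ^ K = 2 ^ (-K) * W ^ K := by
    rw [Real.div_rpow hW (by norm_num), Real.rpow_neg (by norm_num : (0:ℝ) ≤ 2)]
    ring
  have hhalfM : ((X + Y) / 2) ^ K = 2 ^ (-K) * (X + Y) ^ K := by
    rw [Real.div_rpow (by linarith : (0:ℝ) ≤ X + Y) (by norm_num),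
      Real.rpow_neg (by norm_num : (0:ℝ) ≤ 2)]
    ring
  have h1K : (2:ℝ) ^ (1 - K) = 2 * 2 ^ (-K) := by
    rw [show (1:ℝ) - K = 1 + -K by ring, Real.rpow_add two_pos, Real.rpow_one]
  constructor
  · have hkey := key hK0 hK1 ha0 ha2 hs hst
    rw [hhalfW, hhalfM] at hkey
    rw [hTT, hSS, hTS, hWK]
    nlinarith [hkey]
  · have hup := upper_aux hK0 hK1 hX hY
    rw [h1K] at hup
    rw [hTT, hSS, hTS, hWK, h1K]
    nlinarith [hup]

theorem bfBm_quasi_helix (H K : ℝ) (hH : H ∈ Set.Ioo (0:ℝ) 1) (hK : K ∈ Set.Ioc (0:ℝ) 1)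
    (s t : ℝ) (hs : 0 ≤ s) (ht : 0 ≤ t) :
    2 ^ (-K) * |t - s| ^ (2 * H * K) ≤ Rbf H K t t + Rbf H K s s - 2 * Rbf H K t s ∧
    Rbf H K t t + Rbf H K s s - 2 * Rbf H K t s ≤ 2 ^ (1 - K) * |t - s| ^ (2 * H * K) := by
  rcases le_total s t with hst | hst
  · exact main_helper H K hH hK s t hs hst
  · have h := main_helper H K hH hK t s ht hst
    have e1 : Rbf H K s t = Rbf H K t s := by
      rw [Rbf, Rbf, add_comm, abs_sub_comm]
    have e2 : |s - t| = |t - s| := abs_sub_comm s t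
    rw [e1, e2] at h
    constructor <;> [linarith [h.1]; linarith [h.2]]
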